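/- For a zero-dimensional topological space X, the compact-clopen game on X is equivalent to the compact-open game on X: player ONE has a winning strategy in the compact-clopen game if and only if ONE has a winning strategy in the compact-open game, and player TWO has a winning strategy in the compact-clopen game if and only if TWO has a winning strategy in the compact-open game. -/
import Mathlib


/-- `X` is zero-dimensional: it is nonempty and has a base consisting of clopen sets. -/
def ZeroDim (X : Type*) [TopologicalSpace X] : Prop :=
  Nonempty X ∧ ∀ (x : X) (U : Set X), IsOpen U → x ∈ U →
    ∃ C : Set X, IsClopen C ∧ x ∈ C ∧ C ⊆ U

/-- `𝒰` is a cover of `X` consisting of sets satisfying `P`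
(e.g. an open cover for `P = IsOpen`, a clopen cover for `P = IsClopen`). -/
def IsCover {X : Type*} (P : Set X → Prop) (𝒰 : Set (Set X)) : Prop :=
  (∀ U ∈ 𝒰, P U) ∧ ⋃₀ 𝒰 = Set.univ

/-- The selection principle `S_fin(P-covers, P-covers)`: for every sequence of
`P`-covers `u n` there are finite subsets `v n ⊆ u n` whose union is a cover. -/
def SelFin {X : Type*} (P : Set X → Prop) : Prop :=
  ∀ u : ℕ → Set (Set X), (∀ n, IsCover P (u n)) →
    ∃ v : ℕ → Set (Set X), (∀ n, (v n).Finite ∧ v n ⊆ u n) ∧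
      (⋃ n, ⋃₀ v n) = Set.univ

/-- Player ONE has a winning strategy in the selection game `G_fin(P-covers, P-covers)`:
a strategy `σ`, depending on TWO's previous moves, always playing `P`-covers, such that for
every sequence of legal responses by TWO (finite subsets of the cover just played),
the union of TWO's choices fails to cover. -/
def ONEWinsSel {X : Type*} (P : Set X → Prop) : Prop :=
  ∃ σ : List (Set (Set X)) → Set (Set X),
    (∀ h, IsCover P (σ h)) ∧
    ∀ v : ℕ → Set (Set X),
      (∀ n, (v n).Finite ∧ v n ⊆ σ (List.ofFn fun i : Fin n => v i)) →
      (⋃ n, ⋃₀ v n) ≠ Set.univ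

/-- Player TWO has a winning strategy in the selection game `G_fin(P-covers, P-covers)`:
a strategy `τ`, depending on ONE's moves so far, such that against every sequence of
`P`-covers played by ONE, TWO's responses are legal (finite subsets of the corresponding
cover) and their union is a cover. -/
def TWOWinsSel {X : Type*} (P : Set X → Prop) : Prop :=
  ∃ τ : List (Set (Set X)) → Set (Set X),
    ∀ u : ℕ → Set (Set X), (∀ n, IsCover P (u n)) →
      (∀ n, (τ (List.ofFn fun i : Fin (n + 1) => u i)).Finite ∧
        τ (List.ofFn fun i : Fin (n + 1) => u i) ⊆ u n) ∧
      (⋃ n, ⋃₀ τ (List.ofFn fun i : Fin (n + 1) => u i)) = Set.univ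

/-- Player ONE has a winning strategy in the `Q`-`R` game (in round `n`, ONE picks a set
`K n` with `Q (K n)` and TWO responds with a set `U n` with `R (U n)` and `K n ⊆ U n`;
ONE wins if `⋃ n, U n = univ`).  E.g. `Q = IsCompact`, `R = IsClopen` is the
compact-clopen game; `R = IsOpen` gives the compact-open game. -/
def ONEWinsCC {X : Type*} (Q R : Set X → Prop) : Prop :=
  ∃ σ : List (Set X) → Set X,
    (∀ h, Q (σ h)) ∧
    ∀ v : ℕ → Set X,
      (∀ n, R (v n) ∧ σ (List.ofFn fun i : Fin n => v i) ⊆ v n) →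
      (⋃ n, v n) = Set.univ

/-- Player TWO has a winning strategy in the `Q`-`R` game: a strategy `τ`, depending on
ONE's moves so far, such that against every sequence of sets satisfying `Q` played by ONE,
TWO's responses satisfy `R`, contain ONE's corresponding sets, and fail to cover `X`. -/
def TWOWinsCC {X : Type*} (Q R : Set X → Prop) : Prop :=
  ∃ τ : List (Set X) → Set X,
    ∀ u : ℕ → Set X, (∀ n, Q (u n)) →
      (∀ n, R (τ (List.ofFn fun i : Fin (n + 1) => u i)) ∧
        u n ⊆ τ (List.ofFn fun i : Fin (n + 1) => u i)) ∧
      (⋃ n, τ (List.ofFn fun i : Fin (n + 1) => u i)) ≠ Set.univ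

/-- A subset `K` of `X` is mildly compact if every cover of `K` by clopen subsets
of `X` contains a finite subcover. -/
def MildlyCompact {X : Type*} [TopologicalSpace X] (K : Set X) : Prop :=
  ∀ 𝒰 : Set (Set X), (∀ U ∈ 𝒰, IsClopen U) → K ⊆ ⋃₀ 𝒰 →
    ∃ 𝒱 ⊆ 𝒰, 𝒱.Finite ∧ K ⊆ ⋃₀ 𝒱

/-- The quasi-component of a subset `K` of `X`: the intersection of all clopen
subsets of `X` containing `K`. -/
def QuasiComp {X : Type*} [TopologicalSpace X] (K : Set X) : Set X :=
  ⋂₀ {C : Set X | IsClopen C ∧ K ⊆ C}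

section Aux

variable {X : Type*} [TopologicalSpace X]

lemma exists_clopen_between (hX : ZeroDim X) {K U : Set X}
    (hK : IsCompact K) (hU : IsOpen U) (hKU : K ⊆ U) :
    ∃ C : Set X, IsClopen C ∧ K ⊆ C ∧ C ⊆ U := by
  choose C hC hxC hCU using fun x (hx : x ∈ K) => hX.2 x U hU (hKU hx)
  obtain ⟨t, ht⟩ := hK.elim_nhds_subcover' (fun x hx => C x hx)
    (fun x hx => (hC x hx).2.mem_nhds (hxC x hx))
  refine ⟨⋃ x ∈ t, C x.1 x.2, ?_, ht, ?_⟩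
  · exact (t.finite_toSet).isClopen_biUnion (fun x _ => hC x.1 x.2)
  · exact Set.iUnion₂_subset fun x _ => hCU x.1 x.2

open Classical in
/-- Shrink an open superset of `K` to a clopen one (when possible). -/
noncomputable def clShrink (K U : Set X) : Set X :=
  if h : ∃ C : Set X, IsClopen C ∧ K ⊆ C ∧ C ⊆ U then h.choose else Set.univ

lemma clShrink_spec (hX : ZeroDim X) {K U : Set X}
    (hK : IsCompact K) (hU : IsOpen U) (hKU : K ⊆ U) :
    IsClopen (clShrink K U) ∧ K ⊆ clShrink K U ∧ clShrink K U ⊆ U := by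
  have h := exists_clopen_between hX hK hU hKU
  classical
  rw [clShrink]
  rw [dif_pos h]
  exact h.choose_spec

variable (σ : List (Set X) → Set X) (sh : Set X → Set X → Set X)

/-- Shrink a history of TWO's moves, left to right, with accumulator. -/
def shrinkHist : List (Set X) → List (Set X) → List (Set X)
  | acc, [] => acc
  | acc, U :: t => shrinkHist (acc ++ [sh (σ acc) U]) t

variable (v : ℕ → Set X)

/-- The shrunk history of the first `n` of TWO's moves `v`. -/
def seqL : ℕ → List (Set X)
  | 0 => []
  | n + 1 => seqL n ++ [sh (σ (seqL n)) (v n)]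

/-- The `n`-th shrunk move. -/
def seqC (n : ℕ) : Set X := sh (σ (seqL σ sh v n)) (v n)

lemma shrinkHist_append (acc l : List (Set X)) (U : Set X) :
    shrinkHist σ sh acc (l ++ [U]) =
      shrinkHist σ sh acc l ++ [sh (σ (shrinkHist σ sh acc l)) U] := by
  induction l generalizing acc with
  | nil => simp [shrinkHist]
  | cons W t ih => simp [shrinkHist, ih]

lemma shrinkHist_ofFn (n : ℕ) :
    shrinkHist σ sh [] (List.ofFn fun i : Fin n => v i) = seqL σ sh v n := by
  induction n with
  | zero => simp [shrinkHist, seqL]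
  | succ n ih =>
    rw [List.ofFn_succ', List.concat_eq_append, shrinkHist_append]
    simp only [Fin.coe_castSucc, Fin.val_last] at *
    rw [ih]
    rfl

lemma seqL_eq_ofFn (n : ℕ) :
    seqL σ sh v n = List.ofFn fun i : Fin n => seqC σ sh v i := by
  induction n with
  | zero => simp [seqL]
  | succ n ih =>
    rw [List.ofFn_succ', List.concat_eq_append]
    simp only [Fin.coe_castSucc, Fin.val_last]
    rw [← ih]
    rfl

lemma getD_ofFn_last (u : ℕ → Set X) (n : ℕ) :
    (List.ofFn fun i : Fin (n + 1) => u i).getD n ∅ = u n := by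
  rw [List.getD_eq_getElem _ _ (by simp), List.getElem_ofFn]

end Aux

/-- For a zero-dimensional space, the compact-clopen game is equivalent to the
compact-open game: ONE has a winning strategy in one iff in the other, and likewise
for TWO. -/
theorem stmt2 {X : Type*} [TopologicalSpace X] (hX : ZeroDim X) :
    (ONEWinsCC (X := X) IsCompact IsClopen ↔ ONEWinsCC (X := X) IsCompact IsOpen) ∧
    (TWOWinsCC (X := X) IsCompact IsClopen ↔ TWOWinsCC (X := X) IsCompact IsOpen) := by
  constructor
  · constructor
    · -- ONE wins clopen → ONE wins open
      rintro ⟨σ, hσQ, hσwin⟩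
      refine ⟨fun h => σ (shrinkHist σ clShrink [] h), fun h => hσQ _, ?_⟩
      intro v hv
      set c := seqC σ clShrink v with hc
      have hleg : ∀ n, σ (seqL σ clShrink v n) ⊆ v n := by
        intro n
        have := (hv n).2
        dsimp only at this
        rwa [shrinkHist_ofFn] at this
      have hspec : ∀ n, IsClopen (c n) ∧ σ (seqL σ clShrink v n) ⊆ c n ∧ c n ⊆ v n := by
        intro n
        have h := clShrink_spec hX (hσQ (seqL σ clShrink v n)) (hv n).1 (hleg n)
        exact ⟨h.1, h.2.1, h.2.2⟩
      have hcover : (⋃ n, c n) = Set.univ := by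
        apply hσwin
        intro n
        refine ⟨(hspec n).1, ?_⟩
        rw [← seqL_eq_ofFn]
        exact (hspec n).2.1
      apply Set.eq_univ_of_univ_subset
      rw [← hcover]
      exact Set.iUnion_mono fun n => (hspec n).2.2
    · -- ONE wins open → ONE wins clopen
      rintro ⟨σ, hσQ, hσwin⟩
      exact ⟨σ, hσQ, fun v hv => hσwin v fun n => ⟨(hv n).1.isOpen, (hv n).2⟩⟩
  · constructor
    · -- TWO wins clopen → TWO wins open
      rintro ⟨τ, hτ⟩
      refine ⟨τ, fun u hu => ?_⟩
      obtain ⟨h1, h2⟩ := hτ u hu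
      exact ⟨fun n => ⟨(h1 n).1.isOpen, (h1 n).2⟩, h2⟩
    · -- TWO wins open → TWO wins clopen
      rintro ⟨τ, hτ⟩
      refine ⟨fun h => clShrink (h.getD (h.length - 1) ∅) (τ h), ?_⟩
      intro u hu
      obtain ⟨h1, h2⟩ := hτ u hu
      have hlast : ∀ n : ℕ,
          ((List.ofFn fun i : Fin (n + 1) => u i).getD
            ((List.ofFn fun i : Fin (n + 1) => u i).length - 1) ∅) = u n := by
        intro n
        rw [List.length_ofFn]
        simp only [Nat.add_sub_cancel]
        exact getD_ofFn_last u n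
      have hspec : ∀ n, IsClopen (clShrink (u n) (τ (List.ofFn fun i : Fin (n + 1) => u i)))
          ∧ u n ⊆ clShrink (u n) (τ (List.ofFn fun i : Fin (n + 1) => u i))
          ∧ clShrink (u n) (τ (List.ofFn fun i : Fin (n + 1) => u i)) ⊆
            τ (List.ofFn fun i : Fin (n + 1) => u i) :=
        fun n => clShrink_spec hX (hu n) (h1 n).1 (h1 n).2
      constructor
      · intro n
        dsimp only
        rw [hlast n]
        exact ⟨(hspec n).1, (hspec n).2.1⟩
      · intro hcon
        apply h2
        apply Set.eq_univ_of_univ_subset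
        rw [← hcon]
        refine Set.iUnion_mono fun n => ?_
        dsimp only
        rw [hlast n]
        exact (hspec n).2.2
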